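/- Let θ̲, θ̄ be real numbers with −π/2 < θ̲ ≤ θ̄ < π/2, and let v_i ≥ 0, v_j ≥ 0 and θ ∈ [θ̲, θ̄] be real numbers. Set wᴿ = v_i·v_j·cos θ and wᴵ = v_i·v_j·sin θ. Then tan(θ̲)·wᴿ ≤ wᴵ ≤ tan(θ̄)·wᴿ. -/
import Mathlib


open Real

/-- Validity of the phase angle difference cut: for −π/2 < θ̲ ≤ θ̄ < π/2,
v_i, v_j ≥ 0 and θ ∈ [θ̲, θ̄], the lifted variables wᴿ = v_i v_j cos θ and
wᴵ = v_i v_j sin θ satisfy tan(θ̲)·wᴿ ≤ wᴵ ≤ tan(θ̄)·wᴿ. -/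
theorem phase_angle_difference_cut (θl θu vi vj θ : ℝ)
    (hl : -(π / 2) < θl) (hlu : θl ≤ θu) (hu : θu < π / 2)
    (hvi : 0 ≤ vi) (hvj : 0 ≤ vj) (hθl : θl ≤ θ) (hθu : θ ≤ θu) :
    tan θl * (vi * vj * cos θ) ≤ vi * vj * sin θ ∧
      vi * vj * sin θ ≤ tan θu * (vi * vj * cos θ) := by
  have hmem : θ ∈ Set.Ioo (-(π/2)) (π/2) := ⟨lt_of_lt_of_le hl hθl, lt_of_le_of_lt hθu hu⟩
  have hcos : 0 < cos θ := Real.cos_pos_of_mem_Ioo hmem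
  have htl : tan θl ≤ tan θ :=
    Real.strictMonoOn_tan.monotoneOn ⟨hl, lt_of_le_of_lt hlu hu⟩ hmem hθl
  have htu : tan θ ≤ tan θu :=
    Real.strictMonoOn_tan.monotoneOn hmem ⟨lt_of_lt_of_le hl hlu, hu⟩ hθu
  have hsin : tan θ * cos θ = sin θ := Real.tan_mul_cos (ne_of_gt hcos)
  constructor <;> nlinarith [mul_nonneg hvi hvj, mul_nonneg (mul_nonneg hvi hvj) hcos.le]
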